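/- Mutual information bound from a probability perturbation: let π_{αβ} = p_α q_β (1 + ε_{αβ}) be a probability distribution on a finite product set with |ε_{αβ}| ≤ δ < 1/2 and with marginals exactly p and q; then the mutual information satisfies I(π) ≤ 2δ²/(1-δ) · Σ_{α,β} p_α q_β ≤ 2δ²/(1-δ). -/
import Mathlib


theorem mutual_information_perturbation_bound {A B : Type*} [Fintype A] [Fintype B]
    (p : A → ℝ) (q : B → ℝ) (hp : ∀ a, 0 < p a) (hq : ∀ b, 0 < q b)
    (hpsum : ∑ a, p a = 1) (hqsum : ∑ b, q b = 1)
    (ε : A × B → ℝ) (δ : ℝ) (hδ : δ < 1 / 2)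
    (hε : ∀ ab, |ε ab| ≤ δ)
    (π : A × B → ℝ) (hπ : ∀ ab, π ab = p ab.1 * q ab.2 * (1 + ε ab))
    (hπnn : ∀ ab, 0 ≤ π ab)
    (hmarg1 : ∀ a, ∑ b, π (a, b) = p a)
    (hmarg2 : ∀ b, ∑ a, π (a, b) = q b) :
    0 ≤ ∑ a, ∑ b, π (a, b) * Real.log (π (a, b) / (p a * q b)) ∧
      (∑ a, ∑ b, π (a, b) * Real.log (π (a, b) / (p a * q b)))
        ≤ 2 * δ ^ 2 / (1 - δ) := by
  have h1δ : (0:ℝ) < 1 - δ := by linarith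
  have hpq : ∀ a b, 0 < p a * q b := fun a b => mul_pos (hp a) (hq b)
  -- sum of pq = 1
  have hsum_pq : ∑ a, ∑ b, p a * q b = 1 := by
    simp only [← Finset.mul_sum, hqsum, mul_one, hpsum]
  have hsum_pi : ∑ a, ∑ b, π (a, b) = 1 := by
    simp only [hmarg1, hpsum]
  -- lower bound pointwise
  have hlow : ∀ a b, π (a, b) - p a * q b ≤ π (a, b) * Real.log (π (a, b) / (p a * q b)) := by
    intro a b
    rcases (hπnn (a, b)).eq_or_lt with h | h
    · rw [← h]
      nlinarith [hpq a b]
    · have hx : 0 < p a * q b / π (a, b) := div_pos (hpq a b) h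
      have hlog := Real.log_le_sub_one_of_pos hx
      rw [Real.log_div (ne_of_gt (hpq a b)) (ne_of_gt h)] at hlog
      have : Real.log (π (a, b) / (p a * q b)) =
          Real.log (π (a, b)) - Real.log (p a * q b) :=
        Real.log_div (ne_of_gt h) (ne_of_gt (hpq a b))
      rw [this]
      have hdiv : π (a, b) * (p a * q b / π (a, b)) = p a * q b := by
        field_simp
      nlinarith [h]
  have hlower : 0 ≤ ∑ a, ∑ b, π (a, b) * Real.log (π (a, b) / (p a * q b)) := by
    have : ∑ a, ∑ b, (π (a, b) - p a * q b) ≤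
        ∑ a, ∑ b, π (a, b) * Real.log (π (a, b) / (p a * q b)) :=
      Finset.sum_le_sum fun a _ => Finset.sum_le_sum fun b _ => hlow a b
    have heq : ∑ a, ∑ b, (π (a, b) - p a * q b) = 0 := by
      simp only [Finset.sum_sub_distrib, hsum_pi, hsum_pq, sub_self]
    linarith
  refine ⟨hlower, ?_⟩
  -- upper bound
  by_cases hne : Nonempty (A × B)
  · obtain ⟨ab0⟩ := hne
    have hδ0 : 0 ≤ δ := le_trans (abs_nonneg _) (hε ab0)
    have hup : ∀ a b, π (a, b) * Real.log (π (a, b) / (p a * q b)) ≤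
        p a * q b * ε (a, b) + p a * q b * ε (a, b) ^ 2 := by
      intro a b
      have h1e : 0 ≤ 1 + ε (a, b) := by
        have := hπnn (a, b)
        rw [hπ (a, b)] at this
        nlinarith [hpq a b]
      rcases h1e.eq_or_lt with h | h
      · have hπ0 : π (a, b) = 0 := by rw [hπ (a, b)]; simp [← h]
        have hε1 : ε (a, b) = -1 := by linarith
        rw [hπ0, zero_mul, hε1]
        ring_nf
        nlinarith [hpq a b]
      · have hratio : π (a, b) / (p a * q b) = 1 + ε (a, b) := by
          rw [hπ (a, b)]
          exact mul_div_cancel_left₀ _ (ne_of_gt (hpq a b))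
        have hlog := Real.log_le_sub_one_of_pos h
        rw [hratio, hπ (a, b)]
        have hnn : 0 ≤ p a * q b * (1 + ε (a, b)) := mul_nonneg (le_of_lt (hpq a b)) h.le
        nlinarith [mul_le_mul_of_nonneg_left hlog hnn]
    have hsum_ε : ∑ a, ∑ b, p a * q b * ε (a, b) = 0 := by
      have : ∑ a, ∑ b, (p a * q b + p a * q b * ε (a, b)) = 1 := by
        have : ∀ a b, p a * q b + p a * q b * ε (a, b) = π (a, b) := by
          intro a b; rw [hπ (a, b)]; ring
        simp only [this, hsum_pi]
      simp only [Finset.sum_add_distrib, hsum_pq] at this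
      linarith
    have hstep : ∑ a, ∑ b, π (a, b) * Real.log (π (a, b) / (p a * q b)) ≤
        ∑ a, ∑ b, (p a * q b * ε (a, b) + p a * q b * ε (a, b) ^ 2) :=
      Finset.sum_le_sum fun a _ => Finset.sum_le_sum fun b _ => hup a b
    have hsq : ∑ a, ∑ b, p a * q b * ε (a, b) ^ 2 ≤ δ ^ 2 := by
      calc ∑ a, ∑ b, p a * q b * ε (a, b) ^ 2 ≤ ∑ a, ∑ b, p a * q b * δ ^ 2 := by
            refine Finset.sum_le_sum fun a _ => Finset.sum_le_sum fun b _ => ?_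
            have h2 : ε (a, b) ^ 2 ≤ δ ^ 2 := by
              have := hε (a, b)
              nlinarith [abs_nonneg (ε (a, b)), sq_abs (ε (a, b))]
            nlinarith [hpq a b]
        _ = δ ^ 2 := by
            have he : ∑ a, ∑ b, p a * q b * δ ^ 2 = (∑ a, ∑ b, p a * q b) * δ ^ 2 := by
              rw [Finset.sum_mul]
              exact Finset.sum_congr rfl fun a _ => (Finset.sum_mul _ _ _).symm
            rw [he, hsum_pq, one_mul]
    have hfinal : δ ^ 2 ≤ 2 * δ ^ 2 / (1 - δ) := by
      rw [le_div_iff₀ h1δ]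
      nlinarith
    have : ∑ a, ∑ b, (p a * q b * ε (a, b) + p a * q b * ε (a, b) ^ 2) =
        ∑ a, ∑ b, p a * q b * ε (a, b) ^ 2 := by
      simp only [Finset.sum_add_distrib, hsum_ε, zero_add]
    linarith
  · have : IsEmpty (A × B) := not_nonempty_iff.mp hne
    have hempty : ∑ a, ∑ b, π (a, b) * Real.log (π (a, b) / (p a * q b)) = 0 := by
      rcases isEmpty_prod.mp this with h | h
      · simp
      · simp
    rw [hempty]
    positivity
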